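/- For any α ∈ (0,1/2], setting λ = (log 2)/(2 log(1/α)), the Jensen–Shannon divergence satisfies JS_α(P‖Q) ≤ α·√2·H_{1-λ}(P‖Q) for all probability distributions P, Q on a finite set. -/

import Mathlib

open Real BigOperators

/-- Kullback–Leibler divergence between finitely supported distributions. -/
noncomputable def KLdiv {α : Type*} [Fintype α] (P Q : α → ℝ) : ℝ :=
  ∑ x, P x * Real.log (P x / Q x)

/-- Jensen–Shannon divergence with weight `p`. -/
noncomputable def JSdiv {α : Type*} [Fintype α] (p : ℝ) (P Q : α → ℝ) : ℝ :=
  p * KLdiv P (fun x => p * P x + (1 - p) * Q x) +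
    (1 - p) * KLdiv Q (fun x => p * P x + (1 - p) * Q x)

/-- Hellinger divergence of order `s`. -/
noncomputable def Hellinger {α : Type*} [Fintype α] (s : ℝ) (P Q : α → ℝ) : ℝ :=
  (1 / (s - 1)) * ((∑ x, P x ^ s * Q x ^ (1 - s)) - 1)


lemma claimC {a l t : ℝ} (ha0 : 0 < a) (ha2 : a ≤ 1/2) (hl0 : 0 < l) (hl2 : l ≤ 1/2)
    (hid : a ^ l * Real.sqrt 2 = 1) (ht : 0 ≤ t) :
    (1 - a) * t ^ l ≤ Real.sqrt 2 * (1 - l) * (a * t + 1 - a) := by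
  have hs2 : (0:ℝ) < Real.sqrt 2 := by positivity
  have gm := Real.geom_mean_le_arith_mean2_weighted hl0.le (by linarith : (0:ℝ) ≤ 1 - l)
      (mul_nonneg ha0.le ht) zero_le_one (by ring)
  rw [Real.one_rpow, mul_one, mul_one] at gm
  -- gm : (a*t)^l ≤ l*(a*t) + (1-l)
  have hat : (a*t)^l = a^l * t^l := Real.mul_rpow ha0.le ht
  have htl : t ^ l = Real.sqrt 2 * ((a*t)^l) := by
    rw [hat]; linear_combination (-(t ^ l)) * hid
  have h1 : (1 - a) * t ^ l = (1-a) * Real.sqrt 2 * ((a*t)^l) := by rw [htl]; ring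
  rw [h1]
  have h2 : (1-a) * Real.sqrt 2 * ((a*t)^l) ≤ (1-a) * Real.sqrt 2 * (l*(a*t) + (1-l)) := by
    have : (0:ℝ) ≤ (1-a) * Real.sqrt 2 := by nlinarith
    exact mul_le_mul_of_nonneg_left gm this
  refine h2.trans ?_
  nlinarith [mul_nonneg (mul_nonneg hs2.le (mul_nonneg ha0.le ht))
    (by nlinarith : (0:ℝ) ≤ 1 - 2*l + a*l)]


lemma interior_ineq {a l : ℝ} (ha0 : 0 < a) (ha2 : a ≤ 1/2) (hl0 : 0 < l) (hl2 : l ≤ 1/2)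
    (hid : a ^ l * Real.sqrt 2 = 1) {t : ℝ} (ht : 0 < t) :
    a*t*Real.log t - (a*t+1-a)*Real.log (a*t+1-a) ≤
      (Real.sqrt 2 * a / l) * ((1-l)*t + l - t^(1-l)) := by
  have hs2 : (0:ℝ) < Real.sqrt 2 := by positivity
  set c : ℝ := Real.sqrt 2 * a / l with hc
  have hc0 : 0 < c := by positivity
  set φ : ℝ → ℝ := fun s => c*((1-l)*s + l - s^(1-l)) -
      (a*s*Real.log s - (a*s+1-a)*Real.log (a*s+1-a)) with hφ
  set ψ : ℝ → ℝ := fun s => c*(1-l)*(1 - s^(-l)) - a*Real.log s + a*Real.log (a*s+1-a) with hψ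
  have hm : ∀ x : ℝ, 0 < x → 0 < a*x+1-a := fun x hx => by nlinarith
  -- derivative of φ is ψ
  have hder : ∀ x ∈ Set.Ioi (0:ℝ), HasDerivAt φ (ψ x) x := by
    intro x hx
    rw [Set.mem_Ioi] at hx
    have hmx := hm x hx
    have h1 : HasDerivAt (fun s : ℝ => s^(1-l)) ((1-l)*x^(1-l-1)) x :=
      Real.hasDerivAt_rpow_const (Or.inl hx.ne')
    have h2 : HasDerivAt (fun s : ℝ => a*s*Real.log s) (a*Real.log x + a) x := by
      have := ((hasDerivAt_id x).const_mul a).mul (Real.hasDerivAt_log hx.ne')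
      refine this.congr_deriv ?_
      field_simp
      simp only [id_eq]; ring
    have hu : HasDerivAt (fun s : ℝ => a*s+1-a) a x := by
      have h := (((hasDerivAt_id x).const_mul a).add_const (1-a)).congr_deriv
        (by ring : a * 1 = a)
      exact h.congr_of_eventuallyEq (by filter_upwards with s; simp only [id_eq]; ring)
    have h3 : HasDerivAt (fun s : ℝ => (a*s+1-a)*Real.log (a*s+1-a))
        (a*Real.log (a*x+1-a) + a) x := by
      have hl3 : HasDerivAt (fun s : ℝ => Real.log (a*s+1-a)) ((a*x+1-a)⁻¹ * a) x :=
        by have h := (Real.hasDerivAt_log hmx.ne').comp x hu; exact h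
      have := hu.mul hl3
      refine this.congr_deriv ?_
      field_simp
    have h4 : HasDerivAt (fun s : ℝ => c*((1-l)*s + l - s^(1-l)))
        (c*((1-l) - (1-l)*x^(1-l-1))) x := by
      exact ((((hasDerivAt_id x).const_mul (1-l)).add_const l).sub h1).const_mul c
        |>.congr_deriv (by ring)
    have := h4.sub (h2.sub h3)
    refine this.congr_deriv ?_
    have hexp : (1:ℝ)-l-1 = -l := by ring
    rw [hψ]
    simp only [hexp]
    ring
  -- derivative of ψ
  have hder2 : ∀ x ∈ Set.Ioi (0:ℝ), HasDerivAt ψ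
      (c*(1-l)*(l*x^(-l-1)) - a/x + a*((a*x+1-a)⁻¹ * a)) x := by
    intro x hx
    rw [Set.mem_Ioi] at hx
    have hmx := hm x hx
    have h1 : HasDerivAt (fun s : ℝ => s^(-l)) ((-l)*x^(-l-1)) x :=
      Real.hasDerivAt_rpow_const (Or.inl hx.ne')
    have h2 : HasDerivAt (fun s : ℝ => a*Real.log s) (a * x⁻¹) x :=
      (Real.hasDerivAt_log hx.ne').const_mul a
    have hu : HasDerivAt (fun s : ℝ => a*s+1-a) a x := by
      have h := (((hasDerivAt_id x).const_mul a).add_const (1-a)).congr_deriv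
        (by ring : a * 1 = a)
      exact h.congr_of_eventuallyEq (by filter_upwards with s; simp only [id_eq]; ring)
    have h3 : HasDerivAt (fun s : ℝ => a*Real.log (a*s+1-a)) (a*((a*x+1-a)⁻¹ * a)) x := by
      have h := ((Real.hasDerivAt_log hmx.ne').comp x hu).const_mul a
      exact h.congr_of_eventuallyEq (by filter_upwards with s; simp [Function.comp])
    have := (((h1.const_sub 1).const_mul (c*(1-l))).sub h2).add h3
    refine this.congr_deriv ?_
    field_simp
  -- second derivative nonnegative
  have hχ : ∀ x : ℝ, 0 < x → 0 ≤ c*(1-l)*(l*x^(-l-1)) - a/x + a*((a*x+1-a)⁻¹ * a) := by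
    intro x hx
    have hmx := hm x hx
    have hxl : (0:ℝ) < x ^ l := Real.rpow_pos_of_pos hx l
    have hC := claimC ha0 ha2 hl0 hl2 hid hx.le
    have hkey : (1-a) ≤ Real.sqrt 2 * (1-l) * (a*x+1-a) * x^(-l) := by
      rw [Real.rpow_neg hx.le, ← div_eq_mul_inv, le_div_iff₀ hxl]
      linarith
    have hcl : c * (1-l) * l = Real.sqrt 2 * a * (1-l) := by
      rw [hc]; field_simp
    have hx1 : x^(-l-1) = x^(-l)/x := by
      rw [Real.rpow_sub hx, Real.rpow_one]
    have e1 : a/x - a*((a*x+1-a)⁻¹ * a) = a*(1-a)/(x*(a*x+1-a)) := by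
      field_simp
      ring
    have e2 : a*(1-a)/(x*(a*x+1-a)) ≤ a*(Real.sqrt 2 * (1-l) * (a*x+1-a) * x^(-l))/(x*(a*x+1-a)) := by
      gcongr
    have e3 : a*(Real.sqrt 2 * (1-l) * (a*x+1-a) * x^(-l))/(x*(a*x+1-a)) = c*(1-l)*(l*x^(-l-1)) := by
      rw [hx1, hc]
      field_simp
    linarith
  have ψ1 : ψ 1 = 0 := by
    have e : a*(1:ℝ)+1-a = 1 := by ring
    simp [hψ, e, Real.one_rpow, Real.log_one]
  have hmono : MonotoneOn ψ (Set.Ioi (0:ℝ)) := by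
    apply monotoneOn_of_deriv_nonneg (convex_Ioi 0)
    · intro x hx
      exact ((hder2 x hx).differentiableAt.continuousAt).continuousWithinAt
    · rw [interior_Ioi]
      intro x hx
      exact (hder2 x hx).differentiableAt.differentiableWithinAt
    · rw [interior_Ioi]
      intro x hx
      rw [(hder2 x hx).deriv]
      exact hχ x hx
  have φcont : ContinuousOn φ (Set.Ioi (0:ℝ)) := fun x hx =>
    ((hder x hx).differentiableAt.continuousAt).continuousWithinAt
  have φ1 : φ 1 = 0 := by
    have e : a*(1:ℝ)+1-a = 1 := by ring
    simp [hφ, e, Real.one_rpow, Real.log_one]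
  have hφt : 0 ≤ φ t := by
    rcases le_total t 1 with h | h
    · have hanti : AntitoneOn φ (Set.Ioc (0:ℝ) 1) := by
        apply antitoneOn_of_deriv_nonpos (convex_Ioc 0 1)
        · exact φcont.mono (fun y hy => hy.1)
        · rw [interior_Ioc]
          intro x hx
          exact (hder x (Set.mem_Ioi.mpr hx.1)).differentiableAt.differentiableWithinAt
        · rw [interior_Ioc]
          intro x hx
          rw [(hder x (Set.mem_Ioi.mpr hx.1)).deriv]
          have h2 := hmono (Set.mem_Ioi.mpr hx.1) (Set.mem_Ioi.mpr one_pos) hx.2.le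
          rw [ψ1] at h2
          exact h2
      have h3 := hanti (Set.mem_Ioc.mpr ⟨ht, h⟩) (Set.mem_Ioc.mpr ⟨one_pos, le_refl 1⟩) h
      rw [φ1] at h3
      exact h3
    · have hmono2 : MonotoneOn φ (Set.Ici (1:ℝ)) := by
        apply monotoneOn_of_deriv_nonneg (convex_Ici 1)
        · exact φcont.mono (fun y hy => Set.mem_Ioi.mpr (lt_of_lt_of_le one_pos hy))
        · rw [interior_Ici]
          intro x hx
          exact (hder x (Set.mem_Ioi.mpr (lt_trans one_pos hx))).differentiableAt.differentiableWithinAt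
        · rw [interior_Ici]
          intro x hx
          rw [(hder x (Set.mem_Ioi.mpr (lt_trans one_pos hx))).deriv]
          have h2 := hmono (Set.mem_Ioi.mpr one_pos) (Set.mem_Ioi.mpr (lt_trans one_pos hx)) hx.le
          rw [ψ1] at h2
          exact h2
      have h3 := hmono2 (Set.mem_Ici.mpr (le_refl 1)) (Set.mem_Ici.mpr h) h
      rw [φ1] at h3
      exact h3
  have hrfl : φ t = c*((1-l)*t + l - t^(1-l)) -
      (a*t*Real.log t - (a*t+1-a)*Real.log (a*t+1-a)) := rfl
  linarith [hφt]


lemma pointwise_ineq {a l : ℝ} (ha0 : 0 < a) (ha2 : a ≤ 1/2) (hl0 : 0 < l) (hl2 : l ≤ 1/2)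
    (hid : a ^ l * Real.sqrt 2 = 1) (hlog : l * Real.log (1/a) = Real.log 2 / 2)
    {p q : ℝ} (hp : 0 ≤ p) (hq : 0 ≤ q) :
    a * (p * Real.log (p / (a*p + (1-a)*q))) + (1-a) * (q * Real.log (q / (a*p + (1-a)*q)))
      ≤ (Real.sqrt 2 * a / l) * ((1-l)*p + l*q - p^(1-l) * q^l) := by
  have hs2 : (0:ℝ) < Real.sqrt 2 := by positivity
  have h1a : (0:ℝ) < 1 - a := by linarith
  have hs21 : (1:ℝ) ≤ Real.sqrt 2 := by
    rw [show (1:ℝ) = Real.sqrt 1 from (Real.sqrt_one).symm]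
    exact Real.sqrt_le_sqrt (by norm_num)
  have hlog2 : Real.log 2 < 1 := by
    have := Real.log_two_lt_d9; linarith
  have hl1 : (1:ℝ) - l ≠ 0 := by linarith
  rcases eq_or_lt_of_le hp with hp0 | hp0
  · rcases eq_or_lt_of_le hq with hq0 | hq0
    · -- p = 0, q = 0
      rw [← hp0, ← hq0]
      simp [Real.zero_rpow hl1]
    · -- p = 0, q > 0
      rw [← hp0, Real.zero_rpow hl1]
      rw [show a*0+(1-a)*q = (1-a)*q by ring]
      have hq' : q / ((1-a)*q) = 1/(1-a) := by
        rw [eq_div_iff h1a.ne']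
        field_simp [hq0.ne']
      rw [hq']
      have hlg : Real.log (1/(1-a)) ≤ a/(1-a) := by
        have h := Real.log_le_sub_one_of_pos (show (0:ℝ) < 1/(1-a) by positivity)
        have e : 1/(1-a) - 1 = a/(1-a) := by field_simp; ring
        linarith
      have key : (1-a)*Real.log (1/(1-a)) ≤ a := by
        have h := mul_le_mul_of_nonneg_left hlg h1a.le
        have e : (1-a)*(a/(1-a)) = a := by field_simp
        linarith
      have hrhs : (Real.sqrt 2 * a / l) * ((1-l)*0 + l*q - 0*q^l) = Real.sqrt 2 * a * q := by
        field_simp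
        ring
      rw [hrhs]
      have h2 := mul_le_mul_of_nonneg_left key hq0.le
      nlinarith [mul_nonneg (mul_nonneg ha0.le hq0.le) (by linarith : (0:ℝ) ≤ Real.sqrt 2 - 1)]
  · rcases eq_or_lt_of_le hq with hq0 | hq0
    · -- q = 0, p > 0
      rw [← hq0, Real.zero_rpow hl0.ne']
      rw [show a*p+(1-a)*0 = a*p by ring]
      have hp' : p / (a*p) = 1/a := by
        rw [eq_div_iff ha0.ne']
        field_simp [hp0.ne']
      rw [hp']
      have hrhs : (Real.sqrt 2 * a / l) * ((1-l)*p + l*0 - p^(1-l)*0) =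
          (Real.sqrt 2 * a * ((1-l)*p))/l := by
        field_simp; ring
      rw [hrhs, le_div_iff₀ hl0]
      have e : (a * (p * Real.log (1/a)) + (1-a)*(0*Real.log (0/(a*p)))) * l
          = a*p*(Real.log 2/2) := by
        have elog : p * Real.log (1/a) * l = p * (Real.log 2/2) := by
          linear_combination p * hlog
        nlinarith [elog]
      rw [e]
      nlinarith [mul_nonneg (mul_nonneg ha0.le hp0.le)
        (by nlinarith : (0:ℝ) ≤ Real.sqrt 2 * (1-l) - Real.log 2/2)]
    · -- p > 0, q > 0 : use interior lemma with t = p/q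
      have hM : 0 < a*p + (1-a)*q := by nlinarith
      set M := a*p + (1-a)*q with hMdef
      have ht : 0 < p/q := div_pos hp0 hq0
      have hint := interior_ineq ha0 ha2 hl0 hl2 hid ht
      have e1 : a*(p/q)+1-a = M/q := by
        rw [hMdef]; field_simp; ring
      have e2 : Real.log (p/q) = Real.log p - Real.log q := Real.log_div hp0.ne' hq0.ne'
      have e3 : Real.log (M/q) = Real.log M - Real.log q := Real.log_div hM.ne' hq0.ne'
      have e4 : (p/q)^((1:ℝ)-l) = p^((1:ℝ)-l) * q^l / q := by
        rw [Real.div_rpow hp0.le hq0.le, Real.rpow_sub hq0, Real.rpow_one]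
        field_simp
      rw [e1, e3, e2, e4] at hint
      have hmul := mul_le_mul_of_nonneg_left hint hq0.le
      have g1 : Real.log (p/M) = Real.log p - Real.log M := Real.log_div hp0.ne' hM.ne'
      have g2 : Real.log (q/M) = Real.log q - Real.log M := Real.log_div hq0.ne' hM.ne'
      rw [g1, g2]
      have eL : q * (a*(p/q)*(Real.log p - Real.log q) - (M/q)*(Real.log M - Real.log q)) =
          a * (p * (Real.log p - Real.log M)) + (1-a) * (q * (Real.log q - Real.log M)) := by
        rw [hMdef]; field_simp; ring
      have eR : q * ((Real.sqrt 2 * a / l) * ((1-l)*(p/q) + l - p^((1:ℝ)-l)*q^l/q)) =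
          (Real.sqrt 2 * a / l) * ((1-l)*p + l*q - p^((1:ℝ)-l)*q^l) := by
        field_simp
      linarith [hmul, eL, eR]
/-- For `α ∈ (0,1/2]` and `λ = log 2/(2 log(1/α))`,
`JS_α(P‖Q) ≤ α·√2·H_{1-λ}(P‖Q)`. -/
theorem stmt_9 {X : Type*} [Fintype X] (P Q : X → ℝ) (α l : ℝ)
    (hP0 : ∀ x, 0 ≤ P x) (hQ0 : ∀ x, 0 ≤ Q x)
    (hP1 : ∑ x, P x = 1) (hQ1 : ∑ x, Q x = 1)
    (hα : α ∈ Set.Ioc (0:ℝ) (1/2))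
    (hl : l = Real.log 2 / (2 * Real.log (1 / α))) :
    JSdiv α P Q ≤ α * Real.sqrt 2 * Hellinger (1 - l) P Q := by
  obtain ⟨ha0, ha2⟩ := hα
  have h2a : (2:ℝ) ≤ 1/α := by
    rw [le_div_iff₀ ha0]; linarith
  have hlog2pos : (0:ℝ) < Real.log 2 := Real.log_pos (by norm_num)
  have hlogle : Real.log 2 ≤ Real.log (1/α) := Real.log_le_log (by norm_num) h2a
  have hL0 : 0 < Real.log (1/α) := lt_of_lt_of_le hlog2pos hlogle
  have hl0 : 0 < l := by
    rw [hl]; exact div_pos hlog2pos (by linarith)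
  have hl2 : l ≤ 1/2 := by
    rw [hl, div_le_iff₀ (by linarith)]; linarith
  have hlogid : l * Real.log (1/α) = Real.log 2 / 2 := by
    rw [hl]; field_simp
  have hid : α ^ l * Real.sqrt 2 = 1 := by
    have hsa : α ^ l = Real.exp (Real.log α * l) := Real.rpow_def_of_pos ha0 l
    have hlogα : Real.log α = -Real.log (1/α) := by
      rw [one_div, Real.log_inv]; ring
    have hsqrt : Real.sqrt 2 = Real.exp (Real.log 2 / 2) := by
      rw [Real.sqrt_eq_rpow, Real.rpow_def_of_pos (by norm_num)]
      congr 1; ring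
    rw [hsa, hsqrt, ← Real.exp_add]
    rw [show Real.log α * l + Real.log 2/2 = -(l * Real.log (1/α)) + Real.log 2/2 by
      rw [hlogα]; ring]
    rw [hlogid]
    norm_num
  have lhs_eq : JSdiv α P Q = ∑ x, (α * (P x * Real.log (P x / (α*P x + (1-α)*Q x)))
      + (1-α) * (Q x * Real.log (Q x / (α*P x + (1-α)*Q x)))) := by
    rw [JSdiv, KLdiv, KLdiv, Finset.mul_sum, Finset.mul_sum, ← Finset.sum_add_distrib]
  have rhs_eq : α * Real.sqrt 2 * Hellinger (1-l) P Q =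
      ∑ x, (Real.sqrt 2 * α / l) * ((1-l)*P x + l*Q x - P x^((1:ℝ)-l) * Q x^l) := by
    rw [Hellinger]
    rw [show (1:ℝ) - (1-l) = l by ring]
    rw [show (1:ℝ) - l - 1 = -l by ring]
    rw [← Finset.mul_sum, Finset.sum_sub_distrib, Finset.sum_add_distrib,
      ← Finset.mul_sum, ← Finset.mul_sum, hP1, hQ1]
    field_simp [hl0.ne']
    ring
  rw [lhs_eq, rhs_eq]
  exact Finset.sum_le_sum fun x _ =>
    pointwise_ineq ha0 ha2 hl0 hl2 hid hlogid (hP0 x) (hQ0 x)
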